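/- Quantum Laplace expansion with alien row: for a d×d submatrix A = X_{R,C} of an n×n q-generic matrix X, and for all row indices i, j ∈ R and each fixed structure, Σ_{c ∈ C} A_{jc} · (−q)^{pos_R(i) − pos_C(c)} · det_q(A with row i and column c deleted) = δ_{ij} · det_q A, where pos_R(i) is the position of i in the increasing enumeration of R. -/

import Mathlib

/-- An `m × m` matrix `X` over a ring is `q`-generic. -/
def IsQGeneric {R : Type*} [Ring R] (q : Rˣ) {m : ℕ} (X : Fin m → Fin m → R) : Prop :=
  (∀ i k l, k < l → X i l * X i k = ↑q * (X i k * X i l)) ∧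
  (∀ i j k, i < j → X j k * X i k = ↑q * (X i k * X j k)) ∧
  (∀ i j k l, i < j → k < l → X j k * X i l = X i l * X j k) ∧
  (∀ i j k l, i < j → k < l →
    X j l * X i k = X i k * X j l + ((q : R) - ↑q⁻¹) * (X i l * X j k))

/-- Number of inversions of a permutation of `Fin d`. -/
def inversions {d : ℕ} (σ : Equiv.Perm (Fin d)) : ℕ :=
  (Finset.univ.filter (fun p : Fin d × Fin d => p.1 < p.2 ∧ σ p.2 < σ p.1)).card

/-- The quantum determinant
`det_q A = Σ_σ (−q)^{−ℓ(σ)} a_{σ(1),1} ⋯ a_{σ(d),d}` (noncommutative ordered product). -/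
noncomputable def detq {R : Type*} [Ring R] (q : Rˣ) {d : ℕ}
    (A : Fin d → Fin d → R) : R :=
  ∑ σ : Equiv.Perm (Fin d),
    (((-q)⁻¹ : Rˣ) : R) ^ (inversions σ) * (List.ofFn (fun i => A (σ i) i)).prod


set_option linter.unusedSectionVars false

namespace QLap

open Finset

/-- The elimination permutation: `0 ↦ k`, `t.succ ↦ k.succAbove (τ t)`. -/
def elimPerm {p : ℕ} (k : Fin (p + 1)) (τ : Equiv.Perm (Fin p)) : Equiv.Perm (Fin (p + 1)) :=
  (finSuccEquiv p).trans ((τ.optionCongr).trans (finSuccEquiv' k).symm)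

@[simp] lemma elimPerm_zero {p : ℕ} (k : Fin (p + 1)) (τ : Equiv.Perm (Fin p)) :
    elimPerm k τ 0 = k := by
  simp [elimPerm]

@[simp] lemma elimPerm_succ {p : ℕ} (k : Fin (p + 1)) (τ : Equiv.Perm (Fin p)) (t : Fin p) :
    elimPerm k τ t.succ = k.succAbove (τ t) := by
  simp [elimPerm]

lemma elimPerm_bijective {p : ℕ} :
    Function.Bijective (fun x : Fin (p + 1) × Equiv.Perm (Fin p) => elimPerm x.1 x.2) := by
  constructor
  · rintro ⟨k, τ⟩ ⟨k', τ'⟩ h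
    simp only [Prod.mk.injEq]
    have h0 : k = k' := by
      have := DFunLike.congr_fun h 0; simpa using this
    refine ⟨h0, ?_⟩
    ext t
    have := DFunLike.congr_fun h t.succ
    simp only [elimPerm_succ, h0] at this
    exact congrArg Fin.val (Fin.succAbove_right_injective this)
  · intro σ
    set e : Option (Fin p) ≃ Option (Fin p) :=
      (finSuccEquiv p).symm.trans (σ.trans (finSuccEquiv' (σ 0))) with he
    refine ⟨⟨σ 0, e.removeNone⟩, ?_⟩
    ext t
    induction t using Fin.cases with
    | zero => simp
    | succ s =>
      simp only [elimPerm_succ]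
      have hne : σ s.succ ≠ σ 0 := fun hcon => (Fin.succ_ne_zero s) (σ.injective hcon)
      obtain ⟨j, hj⟩ := Fin.exists_succAbove_eq hne
      have hes : e (some s) = some j := by
        rw [he]
        simp only [Equiv.trans_apply, finSuccEquiv_symm_some, Equiv.symm_apply_eq]
        rw [← hj, ← finSuccEquiv'_symm_some]
        simp
      have := Equiv.removeNone_some e ⟨j, hes⟩
      rw [hes] at this
      have : e.removeNone s = j := Option.some_injective _ this
      rw [this, hj]

lemma inversions_eq_sum {d : ℕ} (σ : Equiv.Perm (Fin d)) :
    inversions σ = ∑ i : Fin d, ∑ j : Fin d, if i < j ∧ σ j < σ i then 1 else 0 := by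
  rw [inversions, Finset.card_filter, ← Fintype.sum_prod_type']

lemma sum_ite_lt (p m : ℕ) (hm : m ≤ p) :
    (∑ j : Fin p, if (j : ℕ) < m then 1 else 0) = m := by
  rw [Fin.sum_univ_eq_sum_range (fun j => if j < m then 1 else 0) p, ← Finset.card_filter]
  have : (Finset.range p).filter (fun j => j < m) = Finset.range m := by
    ext i; simp only [Finset.mem_filter, Finset.mem_range]; omega
  rw [this, Finset.card_range]

lemma inversions_elimPerm {p : ℕ} (k : Fin (p + 1)) (τ : Equiv.Perm (Fin p)) :
    inversions (elimPerm k τ) = (k : ℕ) + inversions τ := by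
  rw [inversions_eq_sum, Fin.sum_univ_succ]
  congr 1
  · rw [Fin.sum_univ_succ]
    simp only [elimPerm_zero, elimPerm_succ, lt_self_iff_false, false_and, if_false, zero_add,
      Fin.succ_pos, true_and]
    have h1 : ∀ t : Fin p, (if k.succAbove (τ t) < k then 1 else 0)
        = (if ((τ t : ℕ)) < (k : ℕ) then 1 else 0) := by
      intro t
      congr 1
      simp only [eq_iff_iff]
      rw [Fin.succAbove_lt_iff_castSucc_lt, Fin.lt_def, Fin.coe_castSucc]
    simp only [h1]
    rw [Equiv.sum_comp τ (fun j => if ((j : ℕ)) < (k : ℕ) then 1 else 0)]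
    exact sum_ite_lt p k k.is_le
  · rw [inversions_eq_sum]
    refine Finset.sum_congr rfl fun s _ => ?_
    rw [Fin.sum_univ_succ]
    simp only [elimPerm_succ, elimPerm_zero]
    have h0 : (if s.succ < 0 ∧ k < k.succAbove (τ s) then 1 else 0) = 0 := by
      simp [Fin.not_lt_zero]
    rw [h0, zero_add]
    refine Finset.sum_congr rfl fun t _ => ?_
    congr 1
    simp only [eq_iff_iff, Fin.succ_lt_succ_iff, Fin.succAbove_lt_succAbove_iff]


section Ring

variable {R : Type*} [Ring R] (q : Rˣ) (hq : ∀ x : R, ↑q * x = x * ↑q)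


/-- abbreviation for the scalar `(-q)⁻¹`. -/
noncomputable def cc (q : Rˣ) : R := (((-q)⁻¹ : Rˣ) : R)

include hq

lemma commute_cc (x : R) : Commute (cc q) x := by
  have h1 : Commute (↑q) x := hq x
  have h2 : Commute (↑(-q)) x := by
    rw [Units.val_neg]; exact h1.neg_left
  exact h2.units_inv_left

lemma commute_cc_pow (m : ℕ) (x : R) : Commute ((cc q) ^ m) x :=
  (commute_cc q hq x).pow_left m

omit hq in
lemma detq_eq_cc {d : ℕ} (A : Fin d → Fin d → R) :
    detq q A = ∑ σ : Equiv.Perm (Fin d),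
      (cc q) ^ (inversions σ) * (List.ofFn (fun i => A (σ i) i)).prod := rfl

omit hq in
lemma detq_zero (A : Fin 0 → Fin 0 → R) : detq q A = 1 := by
  rw [detq]
  rw [Finset.sum_eq_single_of_mem (1 : Equiv.Perm (Fin 0)) (Finset.mem_univ _)
    (fun b _ _ => absurd (Subsingleton.elim b 1) (by assumption))]
  simp [inversions]

omit hq in
lemma detq_one (A : Fin 1 → Fin 1 → R) : detq q A = A 0 0 := by
  rw [detq]
  rw [Finset.sum_eq_single_of_mem (1 : Equiv.Perm (Fin 1)) (Finset.mem_univ _)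
    (fun b _ _ => absurd (Subsingleton.elim b 1) (by assumption))]
  have : inversions (1 : Equiv.Perm (Fin 1)) = 0 := by
    rw [inversions_eq_sum]; simp
  rw [this]
  simp [List.ofFn_succ]

/-- Expansion of `detq` along the first column (purely combinatorial). -/
lemma detq_succ {p : ℕ} (A : Fin (p + 1) → Fin (p + 1) → R) :
    detq q A = ∑ k : Fin (p + 1),
      (cc q) ^ (k : ℕ) * (A k 0 * detq q (fun s t => A (k.succAbove s) t.succ)) := by
  rw [detq_eq_cc]
  rw [← Fintype.sum_bijective _ elimPerm_bijective
    (fun x : Fin (p + 1) × Equiv.Perm (Fin p) =>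
      (cc q) ^ (inversions (elimPerm x.1 x.2)) *
        (List.ofFn (fun i => A (elimPerm x.1 x.2 i) i)).prod)
    _ (fun x => rfl)]
  rw [Fintype.sum_prod_type]
  refine Finset.sum_congr rfl fun k _ => ?_
  rw [detq_eq_cc, Finset.mul_sum, Finset.mul_sum]
  refine Finset.sum_congr rfl fun τ _ => ?_
  rw [inversions_elimPerm, pow_add, List.ofFn_succ]
  simp only [elimPerm_zero, elimPerm_succ, List.prod_cons]
  rw [mul_assoc]
  congr 1
  rw [← mul_assoc, (commute_cc_pow q hq (inversions τ) (A k 0)).eq, mul_assoc]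

omit hq in
lemma cc_eq_neg : cc q = -(↑q⁻¹ : R) := by rw [cc, inv_neg, Units.val_neg]

lemma commute_qinv (x : R) : (↑q⁻¹ : R) * x = x * ↑q⁻¹ := by
  have h : cc q * x = x * cc q := commute_cc q hq x
  rw [cc_eq_neg q, neg_mul, mul_neg, neg_inj] at h
  exact h

omit hq in
lemma cc_mul_q (z : R) : cc q * ((↑q : R) * z) = -z := by
  rw [← mul_assoc, cc]
  have : ((((-q)⁻¹ : Rˣ) : R)) * (↑q : R) = -1 := by
    rw [inv_neg, Units.val_neg, neg_mul, Units.inv_mul]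
  rw [this, neg_one_mul]

omit hq in
lemma cc_cancel {z : R} (h : cc q * z = 0) : z = 0 := by
  have : ((-q : Rˣ) : R) * (cc q * z) = z := by
    rw [← mul_assoc, cc, Units.mul_inv, one_mul]
  rw [h, mul_zero] at this
  exact this.symm

omit hq in
/-- abstract two-term cancellation for the "same row twice" case -/
lemma pair_sq_core (v1 v2 m : R) (h1 : v2 * v1 = ↑q * (v1 * v2)) :
    v1 * (v2 * m) + cc q * (v2 * (v1 * m)) = 0 := by
  have e : v2 * (v1 * m) = ↑q * ((v1 * v2) * m) := by
    rw [← mul_assoc, h1, mul_assoc]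
  rw [e, cc_mul_q, ← mul_assoc, add_neg_cancel]

omit hq in
/-- abstract four-term identity for the "distinct rows" case -/
lemma pair_swap_core (a b c' d m : R) (h3 : b * c' = c' * b)
    (h4 : d * a = a * d + ((↑q : R) - ↑q⁻¹) * (c' * b)) :
    b * (c' * m) + cc q * (d * (a * m))
      = cc q * (a * (d * m)) + cc q * (cc q * (c' * (b * m))) := by
  have hcc : cc q = -(↑q⁻¹ : R) := by rw [cc, inv_neg, Units.val_neg]
  set v := (↑q⁻¹ : R) with hv
  set Z := c' * (b * m) with hZ
  have hvq : v * ((↑q : R) * Z) = Z := by rw [← mul_assoc, hv, Units.inv_mul, one_mul]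
  have e1 : d * (a * m) = a * (d * m) + ((↑q : R) * Z - v * Z) := by
    rw [← mul_assoc d a m, h4, add_mul, mul_assoc a d m, mul_assoc _ (c' * b) m,
      mul_assoc c' b m, ← hZ, sub_mul]
  have e2 : b * (c' * m) = Z := by rw [hZ, ← mul_assoc, h3, mul_assoc]
  rw [e1, e2, hcc, mul_add, mul_sub, neg_mul v ((↑q : R) * Z), hvq,
    neg_mul v Z, neg_mul_neg, neg_mul v (v * Z), neg_mul v (a * (d * m))]
  abel

omit hq in
lemma sum_erase_antisymm {γ : Type*} [DecidableEq γ] (U : Finset γ) (H : γ → γ → R)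
    (h : ∀ k ∈ U, ∀ k' ∈ U, k ≠ k' → H k k' = - H k' k) :
    ∑ k ∈ U, ∑ k' ∈ U.erase k, H k k' = 0 := by
  classical
  induction U using Finset.induction_on with
  | empty => simp
  | @insert a V ha IH =>
    rw [Finset.sum_insert ha, Finset.erase_insert ha]
    have hrw : ∀ k ∈ V, ∑ k' ∈ (insert a V).erase k, H k k'
        = H k a + ∑ k' ∈ V.erase k, H k k' := by
      intro k hk
      have hka : a ≠ k := fun hh => ha (hh ▸ hk)
      rw [Finset.erase_insert_of_ne hka, Finset.sum_insert (fun hmem =>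
        ha (Finset.mem_of_mem_erase hmem))]
    rw [Finset.sum_congr rfl hrw, Finset.sum_add_distrib]
    have hIH : ∑ k ∈ V, ∑ k' ∈ V.erase k, H k k' = 0 := by
      apply IH
      intro k hk k' hk' hne
      exact h k (Finset.mem_insert_of_mem hk) k' (Finset.mem_insert_of_mem hk') hne
    rw [hIH, add_zero]
    have hcancel : ∑ k ∈ V, H k a = - ∑ k' ∈ V, H a k' := by
      rw [← Finset.sum_neg_distrib]
      refine Finset.sum_congr rfl fun k hk => ?_
      rw [h a (Finset.mem_insert_self a V) k (Finset.mem_insert_of_mem hk)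
        (fun hh => ha (hh ▸ hk)), neg_neg]
    rw [hcancel, add_neg_cancel]

variable {n : ℕ} (X : Fin n → Fin n → R)

/-- the exterior-algebra style evaluation: `W l U` is the coefficient of `θ_U` in
`ρ_{l_1} ⋯ ρ_{l_m}` where `ρ_i = Σ_k X i k θ_k`. -/
noncomputable def W : List (Fin n) → Finset (Fin n) → R
  | [], U => if U = ∅ then 1 else 0
  | i :: l, U => ∑ k ∈ U,
      (cc q) ^ ((U.filter (fun u => u < k)).card) * (X i k * W l (U.erase k))

include hq

lemma W_cons_cons (x y : Fin n) (l : List (Fin n)) (U : Finset (Fin n)) :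
    W q X (x :: y :: l) U = ∑ k ∈ U, ∑ k' ∈ U.erase k,
      (cc q) ^ ((U.filter (fun u => u < k)).card
          + (((U.erase k).filter (fun u => u < k')).card)) *
        (X x k * (X y k' * W q X l ((U.erase k).erase k'))) := by
  rw [W]
  refine Finset.sum_congr rfl fun k hk => ?_
  rw [W, Finset.mul_sum, Finset.mul_sum]
  refine Finset.sum_congr rfl fun k' hk' => ?_
  rw [pow_add, mul_assoc ((cc q) ^ ((U.filter (fun u => u < k)).card))]
  congr 1
  rw [← mul_assoc, ← (commute_cc_pow q hq (((U.erase k).filter (fun u => u < k')).card)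
    (X x k)).eq, mul_assoc]

lemma W_sq (i : Fin n) (l : List (Fin n)) (U : Finset (Fin n))
    (hrel : ∀ i k l, k < l → X i l * X i k = ↑q * (X i k * X i l)) :
    W q X (i :: i :: l) U = 0 := by
  rw [W_cons_cons q hq]
  apply sum_erase_antisymm
  -- reduce to ordered case
  have key : ∀ k ∈ U, ∀ k' ∈ U, k < k' →
      (cc q) ^ ((U.filter (fun u => u < k)).card
          + (((U.erase k).filter (fun u => u < k')).card)) *
        (X i k * (X i k' * W q X l ((U.erase k).erase k')))
      = - ((cc q) ^ ((U.filter (fun u => u < k')).card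
          + (((U.erase k').filter (fun u => u < k)).card)) *
        (X i k' * (X i k * W q X l ((U.erase k').erase k)))) := by
    intro k hk k' hk' hlt
    have hA : ((U.erase k').filter (fun u => u < k)).card
        = (U.filter (fun u => u < k)).card := by
      rw [Finset.filter_erase, Finset.erase_eq_of_notMem]
      simp only [Finset.mem_filter]
      exact fun hh => absurd hh.2 (not_lt.mpr hlt.le)
    have hB : (U.filter (fun u => u < k')).card
        = ((U.erase k).filter (fun u => u < k')).card + 1 := by
      rw [Finset.filter_erase, Finset.card_erase_of_mem (by
        simp only [Finset.mem_filter]; exact ⟨hk, hlt⟩)]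
      have hpos : 0 < (U.filter (fun u => u < k')).card :=
        Finset.card_pos.mpr ⟨k, by simp only [Finset.mem_filter]; exact ⟨hk, hlt⟩⟩
      omega
    rw [hA, hB, Finset.erase_right_comm (a := k') (b := k)]
    set A := (U.filter (fun u => u < k)).card
    set Bm := ((U.erase k).filter (fun u => u < k')).card
    set m := W q X l ((U.erase k).erase k')
    have hexp : (Bm + 1) + A = (A + Bm) + 1 := by omega
    have hps := pair_sq_core q (X i k) (X i k') m (hrel i k k' hlt)
    rw [hexp, pow_succ, eq_neg_of_add_eq_zero_left hps, mul_neg, mul_assoc]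
  intro k hk k' hk' hne
  rcases lt_or_gt_of_ne hne with hlt | hgt
  · exact key k hk k' hk' hlt
  · rw [key k' hk' k hk hgt, neg_neg]

omit hq in
lemma swap_term_core (E : ℕ) (a b c' d m : R)
    (hcore : b * (c' * m) + cc q * (d * (a * m))
      = cc q * (a * (d * m)) + cc q * (cc q * (c' * (b * m)))) :
    (cc q) ^ E * (b * (c' * m)) - cc q * ((cc q) ^ E * (a * (d * m)))
      = -((cc q) ^ (E + 1) * (d * (a * m))
          - cc q * ((cc q) ^ (E + 1) * (c' * (b * m)))) := by
  have h1 : ∀ (F : ℕ) (Z : R), cc q * ((cc q) ^ F * Z) = (cc q) ^ F * (cc q * Z) := by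
    intro F Z
    rw [← mul_assoc, ← pow_succ', pow_succ, mul_assoc]
  rw [h1, h1, pow_succ, mul_assoc, mul_assoc ((cc q) ^ E) (cc q)]
  rw [← mul_sub, ← mul_sub, ← mul_neg]
  congr 1
  rw [neg_sub, sub_eq_sub_iff_add_eq_add, hcore, add_comm]

lemma W_swap {i j : Fin n} (hij : i < j) (l : List (Fin n)) (U : Finset (Fin n))
    (hX : IsQGeneric q X) :
    W q X (j :: i :: l) U = cc q * W q X (i :: j :: l) U := by
  rw [← sub_eq_zero, W_cons_cons q hq, W_cons_cons q hq, Finset.mul_sum]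
  have hms : ∀ k ∈ U, cc q * ∑ k' ∈ U.erase k,
      (cc q) ^ ((U.filter (fun u => u < k)).card
          + (((U.erase k).filter (fun u => u < k')).card)) *
        (X i k * (X j k' * W q X l ((U.erase k).erase k')))
      = ∑ k' ∈ U.erase k, cc q * ((cc q) ^ ((U.filter (fun u => u < k)).card
          + (((U.erase k).filter (fun u => u < k')).card)) *
        (X i k * (X j k' * W q X l ((U.erase k).erase k')))) := by
    intro k _; rw [Finset.mul_sum]
  rw [Finset.sum_congr rfl hms, ← Finset.sum_sub_distrib]
  have hsub : ∀ k ∈ U, (∑ k' ∈ U.erase k,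
        (cc q) ^ ((U.filter (fun u => u < k)).card
          + (((U.erase k).filter (fun u => u < k')).card)) *
          (X j k * (X i k' * W q X l ((U.erase k).erase k'))))
      - (∑ k' ∈ U.erase k, cc q * ((cc q) ^ ((U.filter (fun u => u < k)).card
          + (((U.erase k).filter (fun u => u < k')).card)) *
          (X i k * (X j k' * W q X l ((U.erase k).erase k')))))
      = ∑ k' ∈ U.erase k, ((cc q) ^ ((U.filter (fun u => u < k)).card
          + (((U.erase k).filter (fun u => u < k')).card)) *
          (X j k * (X i k' * W q X l ((U.erase k).erase k')))
        - cc q * ((cc q) ^ ((U.filter (fun u => u < k)).card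
          + (((U.erase k).filter (fun u => u < k')).card)) *
          (X i k * (X j k' * W q X l ((U.erase k).erase k'))))) := by
    intro k _; rw [Finset.sum_sub_distrib]
  rw [Finset.sum_congr rfl hsub]
  apply sum_erase_antisymm
  have key : ∀ k ∈ U, ∀ k' ∈ U, k < k' →
      ((cc q) ^ ((U.filter (fun u => u < k)).card
          + (((U.erase k).filter (fun u => u < k')).card)) *
          (X j k * (X i k' * W q X l ((U.erase k).erase k')))
        - cc q * ((cc q) ^ ((U.filter (fun u => u < k)).card
          + (((U.erase k).filter (fun u => u < k')).card)) *
          (X i k * (X j k' * W q X l ((U.erase k).erase k')))))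
      = -(((cc q) ^ ((U.filter (fun u => u < k')).card
          + (((U.erase k').filter (fun u => u < k)).card)) *
          (X j k' * (X i k * W q X l ((U.erase k').erase k)))
        - cc q * ((cc q) ^ ((U.filter (fun u => u < k')).card
          + (((U.erase k').filter (fun u => u < k)).card)) *
          (X i k' * (X j k * W q X l ((U.erase k').erase k)))))) := by
    intro k hk k' hk' hlt
    have hA : ((U.erase k').filter (fun u => u < k)).card
        = (U.filter (fun u => u < k)).card := by
      rw [Finset.filter_erase, Finset.erase_eq_of_notMem]
      simp only [Finset.mem_filter]
      exact fun hh => absurd hh.2 (not_lt.mpr hlt.le)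
    have hB : (U.filter (fun u => u < k')).card
        = ((U.erase k).filter (fun u => u < k')).card + 1 := by
      rw [Finset.filter_erase, Finset.card_erase_of_mem (by
        simp only [Finset.mem_filter]; exact ⟨hk, hlt⟩)]
      have hpos : 0 < (U.filter (fun u => u < k')).card :=
        Finset.card_pos.mpr ⟨k, by simp only [Finset.mem_filter]; exact ⟨hk, hlt⟩⟩
      omega
    rw [hA, hB, Finset.erase_right_comm (a := k') (b := k)]
    have hexp : (((U.erase k).filter (fun u => u < k')).card + 1)
        + (U.filter (fun u => u < k)).card
        = ((U.filter (fun u => u < k)).card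
            + ((U.erase k).filter (fun u => u < k')).card) + 1 := by omega
    rw [hexp]
    exact swap_term_core q _ (X i k) (X j k) (X i k') (X j k')
      (W q X l ((U.erase k).erase k'))
      (pair_swap_core q (X i k) (X j k) (X i k') (X j k')
        (W q X l ((U.erase k).erase k'))
        (hX.2.2.1 i j k k' hij hlt) (hX.2.2.2 i j k k' hij hlt))
  intro k hk k' hk' hne
  rcases lt_or_gt_of_ne hne with hlt | hgt
  · exact key k hk k' hk' hlt
  · rw [key k' hk' k hk hgt, neg_neg]

omit hq in
lemma W_cons_zero (x : Fin n) (l : List (Fin n)) (h0 : ∀ U, W q X l U = 0) (U : Finset (Fin n)) :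
    W q X (x :: l) U = 0 := by
  rw [W]
  refine Finset.sum_eq_zero fun k _ => ?_
  rw [h0, mul_zero, mul_zero]

omit hq in
lemma W_cons_mul (x : Fin n) (l l' : List (Fin n)) (s : R)
    (hs : ∀ z : R, s * z = z * s)
    (h : ∀ U, W q X l U = s * W q X l' U) (U : Finset (Fin n)) :
    W q X (x :: l) U = s * W q X (x :: l') U := by
  rw [W, W, Finset.mul_sum]
  refine Finset.sum_congr rfl fun k _ => ?_
  rw [h, ← mul_assoc (X x k) s, ← hs (X x k), mul_assoc, ← mul_assoc _ s, ← hs _, mul_assoc]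

lemma W_mem_zero (hX : IsQGeneric q X) (i : Fin n) (l : List (Fin n)) (h : i ∈ l)
    (U : Finset (Fin n)) : W q X (i :: l) U = 0 := by
  induction l generalizing U with
  | nil => simp at h
  | cons j l' IH =>
    rcases eq_or_ne i j with rfl | hne
    · exact W_sq q hq X i l' U hX.1
    · have hl' : i ∈ l' := by
        rcases List.mem_cons.mp h with h1 | h2
        · exact absurd h1 hne
        · exact h2
      have hz : ∀ V, W q X (j :: i :: l') V = 0 :=
        fun V => W_cons_zero q X j (i :: l') (fun V' => IH hl' V') V
      rcases lt_or_gt_of_ne hne with hlt | hgt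
      · -- i < j : W (j :: i :: l') = cc * W (i :: j :: l')
        have := W_swap q hq X hlt l' U hX
        rw [hz U] at this
        exact (cc_cancel q this.symm)
      · -- j < i
        rw [W_swap q hq X hgt l' U hX, hz U, mul_zero]

lemma W_insert (hX : IsQGeneric q X) :
    ∀ (d : ℕ) (r : Fin (d + 1) → Fin n), StrictMono r → ∀ (a : Fin (d + 1))
      (U : Finset (Fin n)),
      W q X (r a :: List.ofFn (fun t : Fin d => r (a.succAbove t))) U
        = (cc q) ^ (a : ℕ) * W q X (List.ofFn r) U := by
  intro d
  induction d with
  | zero =>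
    intro r _ a U
    have ha : a = 0 := Fin.fin_one_eq_zero a
    subst ha
    simp only [List.ofFn_zero, Fin.val_zero, pow_zero, one_mul]
    rw [show (List.ofFn r) = [r 0] by simp [List.ofFn_succ]]
  | succ d IH =>
    intro r hr a U
    induction a using Fin.cases with
    | zero =>
      simp only [Fin.val_zero, pow_zero, one_mul, Fin.zero_succAbove]
      rw [show List.ofFn r = r 0 :: List.ofFn (fun i : Fin (d + 1) => r i.succ) from
        List.ofFn_succ (f := r)]
    | succ j =>
      have hlist : (List.ofFn fun t : Fin (d + 1) => r (j.succ.succAbove t))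
          = r 0 :: List.ofFn (fun t : Fin d => r ((j.succAbove t).succ)) := by
        rw [List.ofFn_succ]
        congr 1
        · congr 1
          funext t
          rw [Fin.succ_succAbove_succ]
      rw [hlist]
      have h0lt : r 0 < r j.succ := hr (Fin.succ_pos j)
      rw [W_swap q hq X h0lt _ U hX]
      have hIH : ∀ V, W q X (r j.succ :: List.ofFn (fun t : Fin d => r ((j.succAbove t)).succ)) V
          = (cc q) ^ (j : ℕ) * W q X (List.ofFn (fun t : Fin (d + 1) => r t.succ)) V := by
        intro V
        have := IH (fun t => r t.succ) (fun s t hst => hr (Fin.succ_lt_succ_iff.mpr hst)) j V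
        simpa using this
      rw [W_cons_mul q X (r 0) _ _ ((cc q) ^ (j : ℕ))
        (fun z => (commute_cc_pow q hq (j : ℕ) z).eq) hIH U]
      rw [← mul_assoc, ← pow_succ', Fin.val_succ]
      rw [show List.ofFn r = r 0 :: List.ofFn (fun i : Fin (d + 1) => r i.succ) from
        List.ofFn_succ (f := r)]

omit hq in
lemma filter_image_card {p : ℕ} (h : Fin p → Fin n) (hh : StrictMono h) (e : Fin p) :
    ((Finset.univ.image h).filter (fun u => u < h e)).card = (e : ℕ) := by
  rw [Finset.filter_image, Finset.card_image_of_injective _ hh.injective]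
  have : (Finset.univ.filter fun a : Fin p => h a < h e)
      = Finset.univ.filter fun a : Fin p => a < e := by
    refine Finset.filter_congr fun a _ => ?_
    simp [hh.lt_iff_lt]
  rw [this]
  have : (Finset.univ.filter fun a : Fin p => a < e) = Finset.Iio e := by
    ext a; simp
  rw [this, Fin.card_Iio]

omit hq in
lemma erase_image {p : ℕ} (h : Fin (p + 1) → Fin n) (hh : StrictMono h) (e : Fin (p + 1)) :
    (Finset.univ.image h).erase (h e)
      = Finset.univ.image (fun s : Fin p => h (e.succAbove s)) := by
  ext x
  simp only [Finset.mem_erase, Finset.mem_image, Finset.mem_univ, true_and]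
  constructor
  · rintro ⟨hne, t, rfl⟩
    have hte : t ≠ e := fun hh' => hne (by rw [hh'])
    obtain ⟨s, hs⟩ := Fin.exists_succAbove_eq hte
    exact ⟨s, by rw [hs]⟩
  · rintro ⟨s, rfl⟩
    refine ⟨fun hcon => ?_, ⟨e.succAbove s, rfl⟩⟩
    exact Fin.succAbove_ne e s (hh.injective hcon)

omit hq in
lemma W_cons_image {p : ℕ} (i : Fin n) (l : List (Fin n)) (h : Fin (p + 1) → Fin n)
    (hh : StrictMono h) :
    W q X (i :: l) (Finset.univ.image h) = ∑ e : Fin (p + 1), (cc q) ^ (e : ℕ) *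
      (X i (h e) * W q X l (Finset.univ.image (fun s : Fin p => h (e.succAbove s)))) := by
  rw [W, Finset.sum_image (fun x _ y _ hxy => hh.injective hxy)]
  refine Finset.sum_congr rfl fun e _ => ?_
  rw [filter_image_card h hh e, erase_image h hh e]

lemma W_ofFn_image : ∀ (p : ℕ) (g : Fin p → Fin n) (h : Fin p → Fin n), StrictMono h →
    W q X (List.ofFn g) (Finset.univ.image h) = detq q (fun k l => X (g l) (h k)) := by
  intro p
  induction p with
  | zero =>
    intro g h _
    rw [detq_zero, List.ofFn_zero, W]
    simp
  | succ p IH =>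
    intro g h hh
    rw [List.ofFn_succ, W_cons_image q X _ _ h hh, detq_succ q hq]
    refine Finset.sum_congr rfl fun e _ => ?_
    congr 1
    congr 1
    exact IH (fun t => g t.succ) (fun s => h (e.succAbove s))
      (hh.comp (Fin.strictMono_succAbove e))

lemma shuffle {m : ℕ} (E1 : R) (k : ℕ) (f : Fin m → ℕ) (g : Fin m → R) :
    (cc q) ^ k * (E1 * ∑ e : Fin m, (cc q) ^ (f e) * g e)
      = ∑ e : Fin m, (cc q) ^ (k + f e) * (E1 * g e) := by
  rw [Finset.mul_sum, Finset.mul_sum]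
  refine Finset.sum_congr rfl fun e _ => ?_
  rw [← mul_assoc E1, ← (commute_cc_pow q hq (f e) E1).eq, mul_assoc, ← mul_assoc, ← pow_add]

lemma shuffle0 {m : ℕ} (E1 : R) (f : Fin m → ℕ) (g : Fin m → R) :
    ∑ e : Fin m, (cc q) ^ (f e) * (E1 * g e) = E1 * ∑ e : Fin m, (cc q) ^ (f e) * g e := by
  rw [Finset.mul_sum]
  refine Finset.sum_congr rfl fun e _ => ?_
  rw [← mul_assoc E1, ← (commute_cc_pow q hq (f e) E1).eq, mul_assoc]

/-- Quantum Laplace expansion with an alien row, in "transposed-determinant" form. -/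
lemma laplace_rowdet (hX : IsQGeneric q X) {d : ℕ} (r c : Fin (d + 1) → Fin n)
    (hr : StrictMono r) (hc : StrictMono c) (a b : Fin (d + 1)) :
    ∑ e : Fin (d + 1), (cc q) ^ (e : ℕ) *
        (X (r b) (c e) * detq q (fun k l => X (r (a.succAbove l)) (c (e.succAbove k))))
      = (if a = b then (cc q) ^ (a : ℕ) else 0) * detq q (fun k l => X (r l) (c k)) := by
  have h1 : W q X (r b :: List.ofFn (fun t : Fin d => r (a.succAbove t)))
      (Finset.univ.image c)
      = ∑ e : Fin (d + 1), (cc q) ^ (e : ℕ) *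
        (X (r b) (c e) * detq q (fun k l => X (r (a.succAbove l)) (c (e.succAbove k)))) := by
    rw [W_cons_image q X _ _ c hc]
    refine Finset.sum_congr rfl fun e _ => ?_
    congr 1
    congr 1
    exact W_ofFn_image q hq X d (fun t => r (a.succAbove t)) (fun s => c (e.succAbove s))
      (hc.comp (Fin.strictMono_succAbove e))
  rw [← h1]
  rcases eq_or_ne a b with rfl | hab
  · rw [if_pos rfl, W_insert q hq X hX d r hr a (Finset.univ.image c)]
    congr 1
    exact W_ofFn_image q hq X (d + 1) r c hc
  · rw [if_neg hab, zero_mul]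
    apply W_mem_zero q hq X hX
    obtain ⟨t, ht⟩ := Fin.exists_succAbove_eq (Ne.symm hab)
    rw [List.mem_ofFn]
    exact ⟨t, by simp only [ht]⟩

lemma detq_transpose (hX : IsQGeneric q X) :
    ∀ p : ℕ, ∀ r c : Fin p → Fin n, StrictMono r → StrictMono c →
      detq q (fun k l => X (r k) (c l)) = detq q (fun k l => X (r l) (c k)) := by
  intro p
  induction p using Nat.strong_induction_on with
  | _ p IH =>
  match p with
  | 0 => intro r c _ _; rw [detq_zero, detq_zero]
  | 1 => intro r c _ _; rw [detq_one, detq_one]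
  | (pp + 2) =>
    intro r c hr hc
    have IH1 : ∀ (r' c' : Fin (pp + 1) → Fin n), StrictMono r' → StrictMono c' →
        detq q (fun k l => X (r' k) (c' l)) = detq q (fun k l => X (r' l) (c' k)) :=
      fun r' c' h1 h2 => IH (pp + 1) (by omega) r' c' h1 h2
    have IH0 : ∀ (r' c' : Fin pp → Fin n), StrictMono r' → StrictMono c' →
        detq q (fun k l => X (r' k) (c' l)) = detq q (fun k l => X (r' l) (c' k)) :=
      fun r' c' h1 h2 => IH pp (by omega) r' c' h1 h2
    -- left-hand side expansion
    have lhs1 : detq q (fun k l => X (r k) (c l)) = ∑ k : Fin (pp + 2), ∑ e : Fin (pp + 1),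
        (cc q) ^ ((k : ℕ) + (e : ℕ)) *
          (X (r k) (c 0) * (X (r (k.succAbove 0)) (c e.succ) *
            detq q (fun s t => X (r (k.succAbove t.succ)) (c ((e.succAbove s).succ))))) := by
      rw [detq_succ q hq]
      refine Finset.sum_congr rfl fun k _ => ?_
      have hIHin : detq q (fun s t => X (r (k.succAbove s)) (c t.succ))
          = detq q (fun s t => X (r (k.succAbove t)) (c s.succ)) :=
        IH1 (fun s => r (k.succAbove s)) (fun t => c t.succ)
          (hr.comp (Fin.strictMono_succAbove k)) (hc.comp Fin.strictMono_succ)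
      have hexp : detq q (fun s t => X (r (k.succAbove t)) (c s.succ))
          = ∑ e : Fin (pp + 1), (cc q) ^ (e : ℕ) * (X (r (k.succAbove 0)) (c e.succ) *
              detq q (fun s t => X (r (k.succAbove t.succ)) (c ((e.succAbove s).succ)))) := by
        rw [detq_succ q hq]
      rw [hIHin, hexp, shuffle q hq]
    -- right-hand side expansion
    have rhs1 : detq q (fun k l => X (r l) (c k)) = ∑ e : Fin (pp + 2), ∑ kk : Fin (pp + 1),
        (cc q) ^ ((e : ℕ) + (kk : ℕ)) *
          (X (r 0) (c e) * (X (r kk.succ) (c (e.succAbove 0)) *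
            detq q (fun s t => X (r ((kk.succAbove t).succ)) (c (e.succAbove s.succ))))) := by
      rw [detq_succ q hq]
      refine Finset.sum_congr rfl fun e _ => ?_
      have hIHin : detq q (fun s t => X (r s.succ) (c (e.succAbove t)))
          = detq q (fun s t => X (r t.succ) (c (e.succAbove s))) :=
        IH1 (fun s => r s.succ) (fun t => c (e.succAbove t))
          (hr.comp Fin.strictMono_succ) (hc.comp (Fin.strictMono_succAbove e))
      have hexp : detq q (fun s t => X (r s.succ) (c (e.succAbove t)))
          = ∑ kk : Fin (pp + 1), (cc q) ^ (kk : ℕ) * (X (r kk.succ) (c (e.succAbove 0)) *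
              detq q (fun s t => X (r ((kk.succAbove s).succ)) (c (e.succAbove t.succ)))) := by
        rw [detq_succ q hq]
      have hmin : ∀ kk : Fin (pp + 1),
          detq q (fun s t => X (r ((kk.succAbove s).succ)) (c (e.succAbove t.succ)))
            = detq q (fun s t => X (r ((kk.succAbove t).succ)) (c (e.succAbove s.succ))) :=
        fun kk => IH0 (fun s => r ((kk.succAbove s).succ)) (fun t => c (e.succAbove t.succ))
          (hr.comp (Fin.strictMono_succ.comp (Fin.strictMono_succAbove kk)))
          (hc.comp ((Fin.strictMono_succAbove e).comp Fin.strictMono_succ))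
      rw [← hIHin, hexp]
      have hexp2 : ∑ kk : Fin (pp + 1), (cc q) ^ (kk : ℕ) * (X (r kk.succ) (c (e.succAbove 0)) *
              detq q (fun s t => X (r ((kk.succAbove s).succ)) (c (e.succAbove t.succ))))
          = ∑ kk : Fin (pp + 1), (cc q) ^ (kk : ℕ) * (X (r kk.succ) (c (e.succAbove 0)) *
              detq q (fun s t => X (r ((kk.succAbove t).succ)) (c (e.succAbove s.succ)))) := by
        refine Finset.sum_congr rfl fun kk _ => ?_
        rw [hmin kk]
      rw [hexp2, shuffle q hq]
    rw [lhs1, rhs1, Fin.sum_univ_succ, Fin.sum_univ_succ (n := pp + 1)]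
    congr 1
    · -- the `k = 0` / `e = 0` parts agree
      simp only [Fin.zero_succAbove, Fin.val_zero, Nat.zero_add, Fin.succAbove_zero]
      rw [shuffle0 q hq, shuffle0 q hq]
      have hsumL : ∑ e : Fin (pp + 1), (cc q) ^ (e : ℕ) * (X (r (Fin.succ 0)) (c e.succ) *
            detq q (fun s t => X (r t.succ.succ) (c ((e.succAbove s).succ))))
          = detq q (fun s t : Fin (pp + 1) => X (r t.succ) (c s.succ)) := by
        rw [detq_succ q hq (fun s t : Fin (pp + 1) => X (r t.succ) (c s.succ))]
      have hminR : ∀ kk : Fin (pp + 1),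
          detq q (fun s t => X (r ((kk.succAbove t).succ)) (c s.succ.succ))
            = detq q (fun s t => X (r ((kk.succAbove s).succ)) (c t.succ.succ)) :=
        fun kk => (IH0 (fun s => r ((kk.succAbove s).succ)) (fun t => c t.succ.succ)
          (hr.comp (Fin.strictMono_succ.comp (Fin.strictMono_succAbove kk)))
          (hc.comp (Fin.strictMono_succ.comp Fin.strictMono_succ))).symm
      have hsumR : ∑ kk : Fin (pp + 1), (cc q) ^ (kk : ℕ) * (X (r kk.succ) (c (Fin.succ 0)) *
            detq q (fun s t => X (r ((kk.succAbove t).succ)) (c s.succ.succ)))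
          = detq q (fun s t : Fin (pp + 1) => X (r s.succ) (c t.succ)) := by
        have : ∀ kk : Fin (pp + 1), (cc q) ^ (kk : ℕ) * (X (r kk.succ) (c (Fin.succ 0)) *
            detq q (fun s t => X (r ((kk.succAbove t).succ)) (c s.succ.succ)))
            = (cc q) ^ (kk : ℕ) * (X (r kk.succ) (c (Fin.succ 0)) *
            detq q (fun s t => X (r ((kk.succAbove s).succ)) (c t.succ.succ))) := by
          intro kk; rw [hminR kk]
        rw [Finset.sum_congr rfl (fun kk _ => this kk)]
        rw [detq_succ q hq (fun s t : Fin (pp + 1) => X (r s.succ) (c t.succ))]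
      rw [hsumL, hsumR]
      congr 1
      exact (IH1 (fun s => r s.succ) (fun t => c t.succ)
        (hr.comp Fin.strictMono_succ) (hc.comp Fin.strictMono_succ)).symm
    · -- the cross terms agree
      rw [Finset.sum_comm]
      refine Finset.sum_congr rfl fun e _ => ?_
      refine Finset.sum_congr rfl fun kk _ => ?_
      simp only [Fin.succ_succAbove_zero, Fin.succ_succAbove_succ, Fin.val_succ]
      have hexp : (kk : ℕ) + 1 + (e : ℕ) = (e : ℕ) + 1 + (kk : ℕ) := by omega
      rw [hexp]
      congr 1
      rw [← mul_assoc, hX.2.2.1 (r 0) (r kk.succ) (c 0) (c e.succ)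
        (hr (Fin.succ_pos kk)) (hc (Fin.succ_pos e)), mul_assoc]
end Ring
end QLap


/-- Quantum Laplace expansion with an alien row: for a `(d+1)×(d+1)` submatrix
`A = X_{R,C}` of a `q`-generic matrix `X`, rows `i = r a`, `j = r b` of `R`,
`Σ_{c ∈ C} A_{j,c} · (−q)^{pos_R(i) − pos_C(c)} · det_q A^{i,c} = δ_{ij} det_q A`. -/
theorem stmt_5 {R : Type*} [Ring R] (q : Rˣ) (hq : ∀ x : R, ↑q * x = x * ↑q)
    {n d : ℕ} (X : Fin n → Fin n → R) (hX : IsQGeneric q X)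
    (r c : Fin (d + 1) → Fin n) (hr : StrictMono r) (hc : StrictMono c)
    (a b : Fin (d + 1)) :
    ∑ e : Fin (d + 1),
        X (r b) (c e) *
          ((((-q) ^ ((a : ℤ) - (e : ℤ)) : Rˣ) : R) *
            detq q (fun k l => X (r (a.succAbove k)) (c (e.succAbove l))))
      = (if r a = r b then (1 : R) else 0) * detq q (fun k l => X (r k) (c l)) := by
  classical
  have hcomm1 : ∀ x : R, Commute (((-q : Rˣ) : R)) x := by
    intro x
    rw [Units.val_neg]
    exact Commute.neg_left (hq x)
  have hcomm : ∀ (z : ℤ) (x : R), (((-q) ^ z : Rˣ) : R) * x = x * (((-q) ^ z : Rˣ) : R) :=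
    fun z x => ((hcomm1 x).units_zpow_left z).eq
  have key := QLap.laplace_rowdet q hq X hX r c hr hc a b
  have hmin : ∀ e : Fin (d + 1),
      detq q (fun k l => X (r (a.succAbove l)) (c (e.succAbove k)))
        = detq q (fun k l => X (r (a.succAbove k)) (c (e.succAbove l))) := fun e =>
    (QLap.detq_transpose q hq X hX d (fun k => r (a.succAbove k)) (fun l => c (e.succAbove l))
      (hr.comp (Fin.strictMono_succAbove a)) (hc.comp (Fin.strictMono_succAbove e))).symm
  have hA : detq q (fun k l => X (r l) (c k)) = detq q (fun k l => X (r k) (c l)) :=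
    (QLap.detq_transpose q hq X hX (d + 1) r c hr hc).symm
  have hcz : ∀ e : ℕ, (QLap.cc q : R) ^ e = (((-q) ^ (-(e : ℤ)) : Rˣ) : R) := by
    intro e
    rw [QLap.cc, ← Units.val_pow_eq_pow_val, inv_pow, ← zpow_natCast (-q) e, ← zpow_neg]
  have step : ∀ e : Fin (d + 1),
      X (r b) (c e) *
          ((((-q) ^ ((a : ℤ) - (e : ℤ)) : Rˣ) : R) *
            detq q (fun k l => X (r (a.succAbove k)) (c (e.succAbove l))))
        = (((-q) ^ ((a : ℤ)) : Rˣ) : R) * ((QLap.cc q : R) ^ (e : ℕ) *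
            (X (r b) (c e) *
              detq q (fun k l => X (r (a.succAbove l)) (c (e.succAbove k))))) := by
    intro e
    rw [hmin e]
    have hs : (((-q) ^ ((a : ℤ)) : Rˣ) : R) * (QLap.cc q : R) ^ (e : ℕ)
        = (((-q) ^ ((a : ℤ) - (e : ℤ)) : Rˣ) : R) := by
      rw [hcz, ← Units.val_mul, ← zpow_add, ← sub_eq_add_neg]
    conv_rhs => rw [← mul_assoc, hs, ← mul_assoc,
      hcomm ((a : ℤ) - (e : ℤ)) (X (r b) (c e)), mul_assoc]
  rw [Finset.sum_congr rfl (fun e _ => step e), ← Finset.mul_sum, key, hA, ← mul_assoc]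
  congr 1
  have hiff : (r a = r b) ↔ (a = b) := hr.injective.eq_iff
  by_cases hab : a = b
  · rw [if_pos hab, if_pos (hiff.mpr hab)]
    subst hab
    rw [hcz, ← Units.val_mul, ← zpow_add, add_neg_cancel, zpow_zero, Units.val_one]
  · rw [if_neg hab, if_neg (fun hh => hab (hiff.mp hh)), mul_zero]
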